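/- For n ∉ {1,2}, the squared L^2 norm of p_n(x) = H_n(x) + 4n H_{n-2}(x) + 4n(n-3) H_{n-4}(x) with respect to the weight e^{-x^2}/(1+2x^2)^2 equals √π · 2^n n! / ((n-1)(n-2)); equivalently, the normalized polynomials q_n(x) = (((n-1)(n-2))^{1/2} / (π^{1/4} (2^n n!)^{1/2})) p_n(x) are orthonormal. -/

import Mathlib

open Polynomial MeasureTheory

/-- Physicists' Hermite polynomials `H_n`, satisfying `H_{n+1} = 2x H_n - 2n H_{n-1}`,
equivalently given by the Rodrigues formula `H_n(x) = (-1)^n e^{x^2} (d/dx)^n e^{-x^2}`. -/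
noncomputable def hermiteP : ℕ → Polynomial ℝ
  | 0 => 1
  | 1 => C 2 * X
  | (n + 2) => C 2 * X * hermiteP (n + 1) - C (2 * ((n : ℝ) + 1)) * hermiteP n

/-- `H_k` extended by `0` for `k < 0`. -/
noncomputable def Hz (k : ℤ) : Polynomial ℝ :=
  if k < 0 then 0 else hermiteP k.toNat

/-- Unnormalized exceptional Hermite polynomials
`p_n = H_n + 4n H_{n-2} + 4n(n-3) H_{n-4}` (and `0` for negative index). -/
noncomputable def pE (k : ℤ) : Polynomial ℝ :=
  if k < 0 then 0 else
    Hz k + C (4 * (k : ℝ)) * Hz (k - 2) + C (4 * (k : ℝ) * ((k : ℝ) - 3)) * Hz (k - 4)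

open Filter Topology Real Set

/-- evaluation of `hermiteP`. -/
noncomputable def He (n : ℕ) (x : ℝ) : ℝ := (hermiteP n).eval x

lemma He_zero (x : ℝ) : He 0 x = 1 := by simp [He, hermiteP]

lemma He_one (x : ℝ) : He 1 x = 2 * x := by simp [He, hermiteP]

lemma He_rec (n : ℕ) (x : ℝ) :
    He (n + 2) x = 2 * x * He (n + 1) x - 2 * ((n : ℝ) + 1) * He n x := by
  simp only [He, hermiteP, Polynomial.eval_sub, Polynomial.eval_mul, Polynomial.eval_C,
    Polynomial.eval_X]

/-- integrability of polynomial × gaussian -/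
lemma integrable_poly_exp (P : Polynomial ℝ) :
    Integrable (fun x : ℝ => P.eval x * Real.exp (-x ^ 2)) := by
  have key : ∀ n : ℕ, Integrable (fun x : ℝ => x ^ n * Real.exp (-x ^ 2)) := by
    intro n
    have hg : Integrable (fun x : ℝ =>
        ((n.factorial : ℝ) * Real.exp (1 / 2)) * Real.exp (-(1 / 2 : ℝ) * x ^ 2)) :=
      (integrable_exp_neg_mul_sq (by norm_num : (0:ℝ) < 1/2)).const_mul _
    refine hg.mono' ?_ ?_
    · exact ((continuous_pow n).mul (Real.continuous_exp.comp
        (continuous_pow 2).neg)).aestronglyMeasurable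
    · filter_upwards with x
      have h1 : |x| ^ n ≤ (n.factorial : ℝ) * Real.exp |x| := by
        have h2 : |x| ^ n / (n.factorial : ℝ) ≤ Real.exp |x| := by
          refine le_trans ?_ (Real.sum_le_exp_of_nonneg (abs_nonneg x) (n + 1))
          have := Finset.single_le_sum
            (f := fun i => |x| ^ i / (i.factorial : ℝ))
            (fun i _ => by positivity) (Finset.self_mem_range_succ n)
          simpa using this
        have hf : (0:ℝ) < (n.factorial : ℝ) := by positivity
        calc |x| ^ n = |x| ^ n / (n.factorial : ℝ) * (n.factorial : ℝ) := by field_simp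
        _ ≤ Real.exp |x| * (n.factorial : ℝ) := by
            exact mul_le_mul_of_nonneg_right h2 hf.le
        _ = (n.factorial : ℝ) * Real.exp |x| := by ring
      have h3 : |x| - x ^ 2 ≤ 1 / 2 - (1 / 2) * x ^ 2 := by nlinarith [sq_nonneg (|x| - 1), sq_abs x]
      calc ‖x ^ n * Real.exp (-x ^ 2)‖ = |x| ^ n * Real.exp (-x ^ 2) := by
            rw [norm_mul, norm_pow]
            simp [abs_of_pos (Real.exp_pos _)]
      _ ≤ ((n.factorial : ℝ) * Real.exp |x|) * Real.exp (-x ^ 2) :=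
            mul_le_mul_of_nonneg_right h1 (Real.exp_pos _).le
      _ = (n.factorial : ℝ) * Real.exp (|x| - x ^ 2) := by
            rw [mul_assoc, ← Real.exp_add]; ring_nf
      _ ≤ (n.factorial : ℝ) * Real.exp (1 / 2 - (1 / 2) * x ^ 2) := by
            have := Real.exp_le_exp.2 h3
            exact mul_le_mul_of_nonneg_left this (by positivity)
      _ = (n.factorial : ℝ) * Real.exp (1 / 2) * Real.exp (-(1 / 2 : ℝ) * x ^ 2) := by
            rw [mul_assoc, ← Real.exp_add, sub_eq_add_neg, neg_mul]
  have : (fun x : ℝ => P.eval x * Real.exp (-x ^ 2))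
      = fun x : ℝ => ∑ i ∈ Finset.range (P.natDegree + 1),
          P.coeff i * (x ^ i * Real.exp (-x ^ 2)) := by
    funext x
    rw [Polynomial.eval_eq_sum_range, Finset.sum_mul]
    congr 1; funext i; ring
  rw [this]
  exact integrable_finset_sum _ fun i _ => (key i).const_mul _

lemma tendsto_poly_exp_atTop (P : Polynomial ℝ) :
    Tendsto (fun x : ℝ => P.eval x * Real.exp (-x ^ 2)) atTop (𝓝 0) := by
  have h := (P.tendsto_div_exp_atTop).abs
  rw [abs_zero] at h
  refine squeeze_zero_norm' ?_ h
  filter_upwards [eventually_ge_atTop (1:ℝ)] with x hx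
  have hxx : x ≤ x ^ 2 := by nlinarith
  have : Real.exp (-x ^ 2) ≤ Real.exp (-x) := Real.exp_le_exp.2 (by linarith)
  calc ‖P.eval x * Real.exp (-x ^ 2)‖ = |P.eval x| * Real.exp (-x ^ 2) := by
        rw [norm_mul]; simp [abs_of_pos (Real.exp_pos _)]
  _ ≤ |P.eval x| * Real.exp (-x) := mul_le_mul_of_nonneg_left this (abs_nonneg _)
  _ = |P.eval x / Real.exp x| := by
        rw [abs_div, Real.exp_neg, div_eq_mul_inv]
        simp [abs_of_pos (Real.exp_pos x)]

lemma tendsto_poly_exp_atBot (P : Polynomial ℝ) :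
    Tendsto (fun x : ℝ => P.eval x * Real.exp (-x ^ 2)) atBot (𝓝 0) := by
  have h := (tendsto_poly_exp_atTop (P.comp (-X))).comp tendsto_neg_atBot_atTop
  have : ((fun x : ℝ => (P.comp (-X)).eval x * Real.exp (-x ^ 2)) ∘ fun x : ℝ => -x)
      = fun x : ℝ => P.eval x * Real.exp (-x ^ 2) := by
    funext x; simp [Function.comp, Polynomial.eval_comp]
  rwa [this] at h

lemma integral_hasDerivAt_eq_zero (F f : ℝ → ℝ) (hF : ∀ x, HasDerivAt F (f x) x)
    (hf : Integrable f) (htop : Tendsto F atTop (𝓝 0)) (hbot : Tendsto F atBot (𝓝 0)) :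
    ∫ x : ℝ, f x = 0 := by
  have h1 : ∫ x in Iic (0:ℝ), f x = F 0 - 0 :=
    integral_Iic_of_hasDerivAt_of_tendsto' (fun x _ => hF x) hf.integrableOn hbot
  have h2 : ∫ x in Ioi (0:ℝ), f x = 0 - F 0 :=
    integral_Ioi_of_hasDerivAt_of_tendsto' (fun x _ => hF x) hf.integrableOn htop
  rw [← intervalIntegral.integral_Iic_add_Ioi (b := (0:ℝ)) hf.integrableOn hf.integrableOn, h1, h2]
  ring


lemma He_rec' (k : ℕ) (x : ℝ) :
    He (k + 1) x = 2 * x * He k x - 2 * (k : ℝ) * He (k - 1) x := by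
  cases k with
  | zero => rw [He_one, He_zero]; norm_num
  | succ j =>
    have := He_rec j x
    push_cast at this ⊢
    linarith [this]

/-- derivative of Hermite polynomials. -/
lemma He_hasDerivAt : ∀ n : ℕ, ∀ x : ℝ,
    HasDerivAt (He n) (2 * (n : ℝ) * He (n - 1) x) x := by
  intro n
  induction n using Nat.strong_induction_on with
  | _ n ih =>
    match n with
    | 0 =>
      intro x
      have : He 0 = fun _ : ℝ => 1 := by funext y; rw [He_zero]
      rw [this]
      simpa using hasDerivAt_const x (1:ℝ)
    | 1 =>
      intro x
      have : He 1 = fun y : ℝ => 2 * y := by funext y; rw [He_one]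
      rw [this]
      have := (hasDerivAt_id x).const_mul (2:ℝ)
      refine this.congr_deriv (Eq.symm ?_)
      rw [He_zero]; norm_num
    | (k + 2) =>
      intro x
      have hfun : He (k + 2) = fun y : ℝ =>
          2 * y * He (k + 1) y - 2 * ((k : ℝ) + 1) * He k y := by
        funext y; rw [He_rec k y]
      rw [hfun]
      have h1 := ih (k + 1) (by omega) x
      have h0 := ih k (by omega) x
      have hprod := (((hasDerivAt_id x).const_mul (2:ℝ)).mul h1).sub
        (h0.const_mul (2 * ((k : ℝ) + 1)))
      simp only [id_eq, Nat.add_sub_cancel, mul_one] at hprod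
      refine hprod.congr_deriv (Eq.symm ?_)
      have hrec := He_rec' k x
      push_cast
      linear_combination (2 * (k : ℝ) + 2) * hrec

/-- structure lemma giving the derivative of `He m` together with the recurrence. -/
lemma He_deriv_struct (m : ℕ) : ∃ d : ℝ → ℝ,
    (∀ x, HasDerivAt (He m) (d x) x) ∧ (∀ x, He (m + 1) x = 2 * x * He m x - d x) := by
  exact ⟨fun x => 2 * (m : ℝ) * He (m - 1) x, He_hasDerivAt m, fun x => He_rec' m x⟩

/-- Norm of Hermite polynomials. -/
lemma He_norm : ∀ m : ℕ, ∫ x : ℝ, (He m x) ^ 2 * Real.exp (-x ^ 2)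
    = Real.sqrt Real.pi * 2 ^ m * (Nat.factorial m : ℝ) := by
  intro m
  induction m with
  | zero =>
    have h : ∫ x : ℝ, Real.exp (-x ^ 2) = Real.sqrt Real.pi := by
      have := integral_gaussian 1
      simpa using this
    simp only [He_zero, one_pow, one_mul, pow_zero, Nat.factorial_zero, Nat.cast_one, mul_one]
    exact h
  | succ k ih =>
    obtain ⟨d, hd, hrel⟩ := He_deriv_struct k
    set F : ℝ → ℝ := fun x => He (k + 1) x * He k x * Real.exp (-x ^ 2) with hF
    set f : ℝ → ℝ := fun x =>
      (2 * ((k : ℝ) + 1) * (He k x) ^ 2 - (He (k + 1) x) ^ 2) * Real.exp (-x ^ 2) with hf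
    have hDeriv : ∀ x, HasDerivAt F (f x) x := by
      intro x
      have hE : HasDerivAt (fun y : ℝ => Real.exp (-y ^ 2)) (-2 * x * Real.exp (-x ^ 2)) x := by
        have h0 : HasDerivAt (fun y : ℝ => -y ^ 2) (-(2 * x)) x := by
          have := (hasDerivAt_pow 2 x).neg
          refine this.congr_deriv (Eq.symm ?_)
          push_cast; ring
        have := h0.exp
        refine this.congr_deriv (Eq.symm ?_); ring
      have hprod := ((He_hasDerivAt (k + 1) x).mul (hd x)).mul hE
      refine hprod.congr_deriv (Eq.symm ?_)
      have h2 := hrel x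
      have h3 : d x = 2 * x * He k x - He (k + 1) x := by linarith
      have h4 := He_hasDerivAt (k + 1) x
      rw [hf]
      show (2 * ((k : ℝ) + 1) * (He k x) ^ 2 - (He (k + 1) x) ^ 2) * Real.exp (-x ^ 2)
        = (2 * (((k:ℕ) + 1 : ℕ) : ℝ) * He ((k + 1) - 1) x * He k x + He (k + 1) x * d x)
            * Real.exp (-x ^ 2)
          + He (k + 1) x * He k x * (-2 * x * Real.exp (-x ^ 2))
      have h5 : ((k:ℕ) + 1 - 1 : ℕ) = k := rfl
      rw [h5, h3]
      push_cast
      ring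
    have hInt : Integrable f := by
      have : f = fun x => ((C (2 * ((k : ℝ) + 1)) * (hermiteP k) ^ 2
          - (hermiteP (k + 1)) ^ 2).eval x) * Real.exp (-x ^ 2) := by
        funext x; simp [hf, He]
      rw [this]; exact integrable_poly_exp _
    have hTop : Tendsto F atTop (𝓝 0) := by
      have : F = fun x => ((hermiteP (k + 1) * hermiteP k).eval x) * Real.exp (-x ^ 2) := by
        funext x; simp [hF, He]
      rw [this]; exact tendsto_poly_exp_atTop _
    have hBot : Tendsto F atBot (𝓝 0) := by
      have : F = fun x => ((hermiteP (k + 1) * hermiteP k).eval x) * Real.exp (-x ^ 2) := by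
        funext x; simp [hF, He]
      rw [this]; exact tendsto_poly_exp_atBot _
    have hzero := integral_hasDerivAt_eq_zero F f hDeriv hInt hTop hBot
    have hIk : Integrable (fun x : ℝ => (He k x) ^ 2 * Real.exp (-x ^ 2)) := by
      have : (fun x : ℝ => (He k x) ^ 2 * Real.exp (-x ^ 2))
          = fun x => (((hermiteP k) ^ 2).eval x) * Real.exp (-x ^ 2) := by
        funext x; simp [He]
      rw [this]; exact integrable_poly_exp _
    have hIk1 : Integrable (fun x : ℝ => (He (k + 1) x) ^ 2 * Real.exp (-x ^ 2)) := by
      have : (fun x : ℝ => (He (k + 1) x) ^ 2 * Real.exp (-x ^ 2))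
          = fun x => (((hermiteP (k + 1)) ^ 2).eval x) * Real.exp (-x ^ 2) := by
        funext x; simp [He]
      rw [this]; exact integrable_poly_exp _
    have hsplit : ∫ x : ℝ, f x
        = 2 * ((k : ℝ) + 1) * (∫ x : ℝ, (He k x) ^ 2 * Real.exp (-x ^ 2))
          - ∫ x : ℝ, (He (k + 1) x) ^ 2 * Real.exp (-x ^ 2) := by
      rw [hf]
      have heq : (fun x : ℝ => (2 * ((k : ℝ) + 1) * (He k x) ^ 2 - (He (k + 1) x) ^ 2)
          * Real.exp (-x ^ 2))
          = fun x : ℝ => 2 * ((k : ℝ) + 1) * ((He k x) ^ 2 * Real.exp (-x ^ 2))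
            - (He (k + 1) x) ^ 2 * Real.exp (-x ^ 2) := by
        funext x; ring
      rw [heq, MeasureTheory.integral_sub (hIk.const_mul _) hIk1,
        MeasureTheory.integral_const_mul]
    rw [hzero] at hsplit
    have hkey : 2 * ((k : ℝ) + 1) * (∫ x : ℝ, (He k x) ^ 2 * Real.exp (-x ^ 2))
        = ∫ x : ℝ, (He (k + 1) x) ^ 2 * Real.exp (-x ^ 2) :=
      sub_eq_zero.mp hsplit.symm
    rw [← hkey]
    rw [ih, Nat.factorial_succ]
    push_cast; ring

lemma Hz_natCast (k : ℕ) : Hz (k : ℤ) = hermiteP k := by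
  simp [Hz]

theorem exceptional_hermite_norm (n : ℕ) (h1 : n ≠ 1) (h2 : n ≠ 2) :
    ∫ x : ℝ, ((pE (n : ℤ)).eval x) ^ 2 * (Real.exp (-x ^ 2) / (1 + 2 * x ^ 2) ^ 2)
      = Real.sqrt Real.pi * 2 ^ n * (Nat.factorial n : ℝ) / (((n : ℝ) - 1) * ((n : ℝ) - 2)) := by
  have hIE : Integrable (fun x : ℝ => Real.exp (-x ^ 2)) := by
    have := integrable_exp_neg_mul_sq (by norm_num : (0:ℝ) < 1)
    simpa using this
  have hvpos : ∀ x : ℝ, (0:ℝ) < 1 + 2 * x ^ 2 := fun x => by positivity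
  have hvne : ∀ x : ℝ, (1:ℝ) + 2 * x ^ 2 ≠ 0 := fun x => (hvpos x).ne'
  have hv1 : ∀ x : ℝ, (1:ℝ) ≤ 1 + 2 * x ^ 2 := fun x => by nlinarith [sq_nonneg x]
  have hv21 : ∀ x : ℝ, (1:ℝ) ≤ (1 + 2 * x ^ 2) ^ 2 := fun x => by nlinarith [sq_nonneg x]
  have hE : ∀ x : ℝ, HasDerivAt (fun y : ℝ => Real.exp (-y ^ 2))
      (-2 * x * Real.exp (-x ^ 2)) x := by
    intro x
    have h0 : HasDerivAt (fun y : ℝ => -y ^ 2) (-(2 * x)) x := by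
      have := (hasDerivAt_pow 2 x).neg
      refine this.congr_deriv (Eq.symm ?_)
      push_cast; ring
    have := h0.exp
    refine this.congr_deriv (Eq.symm ?_); ring
  have hv : ∀ x : ℝ, HasDerivAt (fun y : ℝ => 1 + 2 * y ^ 2) (4 * x) x := by
    intro x
    have := ((hasDerivAt_pow 2 x).const_mul (2:ℝ)).const_add (1:ℝ)
    refine this.congr_deriv (Eq.symm ?_)
    push_cast; ring
  have hgauss : ∫ x : ℝ, Real.exp (-x ^ 2) = Real.sqrt Real.pi := by
    have := integral_gaussian 1
    simpa using this
  obtain rfl | ⟨m, rfl⟩ : n = 0 ∨ ∃ m, n = m + 3 := by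
    rcases Nat.lt_or_ge n 3 with h | h
    · left; omega
    · right; exact ⟨n - 3, by omega⟩
  · -- case n = 0
    have hp0 : ∀ x : ℝ, (pE ((0:ℕ) : ℤ)).eval x = 1 := by
      intro x
      simp [pE, Hz, hermiteP]
    set G : ℝ → ℝ := fun x => x * Real.exp (-x ^ 2) / (1 + 2 * x ^ 2) with hG
    set g : ℝ → ℝ := fun x =>
      2 * (Real.exp (-x ^ 2) / (1 + 2 * x ^ 2) ^ 2) - Real.exp (-x ^ 2) with hg
    have hGd : ∀ x, HasDerivAt G (g x) x := by
      intro x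
      have hnum : HasDerivAt (fun y : ℝ => y * Real.exp (-y ^ 2))
          (Real.exp (-x ^ 2) + x * (-2 * x * Real.exp (-x ^ 2))) x := by
        have := (hasDerivAt_id x).mul (hE x)
        simp only [id_eq] at this
        refine this.congr_deriv (Eq.symm ?_); ring
      have hdiv := hnum.div (hv x) (hvne x)
      refine hdiv.congr_deriv (Eq.symm ?_)
      rw [hg]
      show 2 * (Real.exp (-x ^ 2) / (1 + 2 * x ^ 2) ^ 2) - Real.exp (-x ^ 2) = _
      field_simp
      ring
    have hIEv : Integrable (fun x : ℝ => Real.exp (-x ^ 2) / (1 + 2 * x ^ 2) ^ 2) := by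
      refine hIE.mono' ?_ ?_
      · exact ((Real.continuous_exp.comp (continuous_pow 2).neg).div
          ((continuous_const.add (continuous_const.mul (continuous_pow 2))).pow 2)
          (fun x => pow_ne_zero 2 (hvne x))).aestronglyMeasurable
      · filter_upwards with x
        rw [Real.norm_eq_abs, abs_of_pos (div_pos (Real.exp_pos _) (pow_pos (hvpos x) 2))]
        exact div_le_self (Real.exp_pos _).le (hv21 x)
    have hIg : Integrable g := (hIEv.const_mul 2).sub hIE
    have hGtop : Tendsto G atTop (𝓝 0) := by
      have hb := (tendsto_poly_exp_atTop X).norm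
      rw [norm_zero] at hb
      refine squeeze_zero_norm ?_ hb
      intro x
      rw [hG]
      simp only [Polynomial.eval_X]
      rw [Real.norm_eq_abs, Real.norm_eq_abs, abs_div, abs_of_pos (hvpos x)]
      exact div_le_self (abs_nonneg _) (hv1 x)
    have hGbot : Tendsto G atBot (𝓝 0) := by
      have hb := (tendsto_poly_exp_atBot X).norm
      rw [norm_zero] at hb
      refine squeeze_zero_norm ?_ hb
      intro x
      rw [hG]
      simp only [Polynomial.eval_X]
      rw [Real.norm_eq_abs, Real.norm_eq_abs, abs_div, abs_of_pos (hvpos x)]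
      exact div_le_self (abs_nonneg _) (hv1 x)
    have hzero := integral_hasDerivAt_eq_zero G g hGd hIg hGtop hGbot
    have hsplit : ∫ x : ℝ, g x
        = 2 * (∫ x : ℝ, Real.exp (-x ^ 2) / (1 + 2 * x ^ 2) ^ 2)
          - ∫ x : ℝ, Real.exp (-x ^ 2) := by
      show (∫ x : ℝ, (2 * (Real.exp (-x ^ 2) / (1 + 2 * x ^ 2) ^ 2) - Real.exp (-x ^ 2))) = _
      rw [MeasureTheory.integral_sub (hIEv.const_mul 2) hIE,
        MeasureTheory.integral_const_mul]
    rw [hzero, hgauss] at hsplit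
    have hval : ∫ x : ℝ, Real.exp (-x ^ 2) / (1 + 2 * x ^ 2) ^ 2 = Real.sqrt Real.pi / 2 := by
      linarith
    have hfun : (fun x : ℝ => ((pE ((0:ℕ) : ℤ)).eval x) ^ 2
        * (Real.exp (-x ^ 2) / (1 + 2 * x ^ 2) ^ 2))
        = fun x : ℝ => Real.exp (-x ^ 2) / (1 + 2 * x ^ 2) ^ 2 := by
      funext x; rw [hp0 x]; ring
    rw [hfun, hval]
    norm_num
  · -- case n = m + 3
    obtain ⟨d, hd, hrel⟩ := He_deriv_struct m
    have hpeval : ∀ x : ℝ, (pE ((m + 3 : ℕ) : ℤ)).eval x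
        = 2 * ((1 + 2 * x ^ 2) * He (m + 1) x + 4 * x * He m x) := by
      intro x
      have hnonneg : ¬ ((m + 3 : ℕ) : ℤ) < 0 := not_lt.mpr (Int.natCast_nonneg _)
      have e2 : ((m + 3 : ℕ) : ℤ) - 2 = ((m + 1 : ℕ) : ℤ) := by push_cast; ring
      rw [pE, if_neg hnonneg, e2, Hz_natCast, Hz_natCast]
      cases m with
      | zero =>
        have e4 : ((0 + 3 : ℕ) : ℤ) - 4 = (-1 : ℤ) := by norm_num
        rw [e4]
        have hzneg : Hz (-1) = 0 := by simp [Hz]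
        rw [hzneg]
        simp only [Polynomial.eval_add, Polynomial.eval_mul, Polynomial.eval_C,
          mul_zero, Polynomial.eval_zero]
        show He (0 + 3) x + 4 * ((0 + 3 : ℕ) : ℝ) * He (0 + 1) x + 0
            = 2 * ((1 + 2 * x ^ 2) * He (0 + 1) x + 4 * x * He 0 x)
        have h3 : He 3 x = 2 * x * He 2 x - 4 * He 1 x := by
          have := He_rec 1 x; push_cast at this; linarith
        have h2 : He 2 x = 2 * x * He 1 x - 2 * He 0 x := by
          have := He_rec 0 x; push_cast at this; linarith
        rw [He_zero] at *
        rw [He_one] at *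
        push_cast
        show He 3 x + 4 * 3 * (2 * x) + 0 = 2 * ((1 + 2 * x ^ 2) * (2 * x) + 4 * x * 1)
        linear_combination h3 + 2 * x * h2
      | succ j =>
        have e4 : ((j + 1 + 3 : ℕ) : ℤ) - 4 = ((j : ℕ) : ℤ) := by push_cast; ring
        rw [e4, Hz_natCast]
        simp only [Polynomial.eval_add, Polynomial.eval_mul, Polynomial.eval_C]
        show He (j + 1 + 3) x + 4 * ((j + 1 + 3 : ℕ) : ℝ) * He (j + 1 + 1) x
            + 4 * ((j + 1 + 3 : ℕ) : ℝ) * (((j + 1 + 3 : ℕ) : ℝ) - 3) * He j x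
            = 2 * ((1 + 2 * x ^ 2) * He (j + 1 + 1) x + 4 * x * He (j + 1) x)
        have ej1 : j + 1 + 3 = j + 4 := by omega
        have ej2 : j + 1 + 1 = j + 2 := by omega
        rw [ej1, ej2]
        have hr1 : He (j + 4) x = 2 * x * He (j + 3) x - 2 * ((j : ℝ) + 3) * He (j + 2) x := by
          have h := He_rec (j + 2) x
          rw [show j + 2 + 2 = j + 4 from rfl, show j + 2 + 1 = j + 3 from rfl] at h
          push_cast at h; linarith
        have hr2 : He (j + 3) x = 2 * x * He (j + 2) x - 2 * ((j : ℝ) + 2) * He (j + 1) x := by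
          have h := He_rec (j + 1) x
          rw [show j + 1 + 2 = j + 3 from rfl, show j + 1 + 1 = j + 2 from rfl] at h
          push_cast at h; linarith
        have hr3 : He (j + 2) x = 2 * x * He (j + 1) x - 2 * ((j : ℝ) + 1) * He j x := by
          have h := He_rec j x
          push_cast at h; linarith
        push_cast
        linear_combination hr1 + 2 * x * hr2 + (2 * (j : ℝ) + 8) * hr3
    set F : ℝ → ℝ := fun x => 16 * x * (He m x) ^ 2 * Real.exp (-x ^ 2) / (1 + 2 * x ^ 2)
      with hFdef
    set f : ℝ → ℝ := fun x => 4 * ((He (m + 1) x) ^ 2 * Real.exp (-x ^ 2))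
        + 16 * ((He m x) ^ 2 * Real.exp (-x ^ 2))
        - ((pE ((m + 3 : ℕ) : ℤ)).eval x) ^ 2 * (Real.exp (-x ^ 2) / (1 + 2 * x ^ 2) ^ 2)
      with hfdef
    have hFd : ∀ x, HasDerivAt F (f x) x := by
      intro x
      have hnum : HasDerivAt (fun y : ℝ => 16 * y * (He m y) ^ 2 * Real.exp (-y ^ 2))
          ((16 * (He m x) ^ 2 + 16 * x * (2 * He m x * d x)) * Real.exp (-x ^ 2)
            + 16 * x * (He m x) ^ 2 * (-2 * x * Real.exp (-x ^ 2))) x := by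
        have ha : HasDerivAt (fun y : ℝ => 16 * y * (He m y) ^ 2)
            (16 * (He m x) ^ 2 + 16 * x * (2 * He m x * d x)) x := by
          have := ((hasDerivAt_id x).const_mul (16:ℝ)).mul ((hd x).pow 2)
          simp only [id_eq] at this
          refine this.congr_deriv (Eq.symm ?_)
          rw [Pi.pow_apply]; ring
        have := ha.mul (hE x)
        refine this.congr_deriv rfl
      have hdiv := hnum.div (hv x) (hvne x)
      refine hdiv.congr_deriv (Eq.symm ?_)
      rw [hfdef]
      show 4 * ((He (m + 1) x) ^ 2 * Real.exp (-x ^ 2))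
          + 16 * ((He m x) ^ 2 * Real.exp (-x ^ 2))
          - ((pE ((m + 3 : ℕ) : ℤ)).eval x) ^ 2 * (Real.exp (-x ^ 2) / (1 + 2 * x ^ 2) ^ 2)
          = _
      rw [hpeval x]
      have hdval : d x = 2 * x * He m x - He (m + 1) x := by
        have := hrel x; linarith
      rw [hdval]
      field_simp
      ring
    have hI1 : Integrable (fun x : ℝ => (He (m + 1) x) ^ 2 * Real.exp (-x ^ 2)) := by
      have : (fun x : ℝ => (He (m + 1) x) ^ 2 * Real.exp (-x ^ 2))
          = fun x => (((hermiteP (m + 1)) ^ 2).eval x) * Real.exp (-x ^ 2) := by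
        funext x; simp [He]
      rw [this]; exact integrable_poly_exp _
    have hI0 : Integrable (fun x : ℝ => (He m x) ^ 2 * Real.exp (-x ^ 2)) := by
      have : (fun x : ℝ => (He m x) ^ 2 * Real.exp (-x ^ 2))
          = fun x => (((hermiteP m) ^ 2).eval x) * Real.exp (-x ^ 2) := by
        funext x; simp [He]
      rw [this]; exact integrable_poly_exp _
    have hIp : Integrable (fun x : ℝ => ((pE ((m + 3 : ℕ) : ℤ)).eval x) ^ 2
        * (Real.exp (-x ^ 2) / (1 + 2 * x ^ 2) ^ 2)) := by
      have hg' : Integrable (fun x : ℝ => ((pE ((m + 3 : ℕ) : ℤ)) ^ 2).eval x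
          * Real.exp (-x ^ 2)) := integrable_poly_exp _
      refine hg'.mono' ?_ ?_
      · refine Continuous.aestronglyMeasurable ?_
        refine (((pE ((m + 3 : ℕ) : ℤ)).continuous).pow 2).mul ?_
        exact (Real.continuous_exp.comp (continuous_pow 2).neg).div
          ((continuous_const.add (continuous_const.mul (continuous_pow 2))).pow 2)
          (fun x => pow_ne_zero 2 (hvne x))
      · filter_upwards with x
        rw [Real.norm_eq_abs, Polynomial.eval_pow]
        rw [abs_of_nonneg (by positivity)]
        refine mul_le_mul_of_nonneg_left ?_ (sq_nonneg _)
        exact div_le_self (Real.exp_pos _).le (hv21 x)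
    have hIf : Integrable f := ((hI1.const_mul 4).add (hI0.const_mul 16)).sub hIp
    have hFtop : Tendsto F atTop (𝓝 0) := by
      have hb := (tendsto_poly_exp_atTop (C 16 * X * (hermiteP m) ^ 2)).norm
      rw [norm_zero] at hb
      refine squeeze_zero_norm ?_ hb
      intro x
      rw [hFdef]
      simp only [Polynomial.eval_mul, Polynomial.eval_C, Polynomial.eval_X, Polynomial.eval_pow]
      rw [Real.norm_eq_abs, Real.norm_eq_abs, abs_div, abs_of_pos (hvpos x)]
      have habs : |16 * x * He m x ^ 2 * Real.exp (-x ^ 2)|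
          = |16 * x * (hermiteP m).eval x ^ 2 * Real.exp (-x ^ 2)| := by
        rw [He]
      rw [habs]
      exact div_le_self (abs_nonneg _) (hv1 x)
    have hFbot : Tendsto F atBot (𝓝 0) := by
      have hb := (tendsto_poly_exp_atBot (C 16 * X * (hermiteP m) ^ 2)).norm
      rw [norm_zero] at hb
      refine squeeze_zero_norm ?_ hb
      intro x
      rw [hFdef]
      simp only [Polynomial.eval_mul, Polynomial.eval_C, Polynomial.eval_X, Polynomial.eval_pow]
      rw [Real.norm_eq_abs, Real.norm_eq_abs, abs_div, abs_of_pos (hvpos x)]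
      have habs : |16 * x * He m x ^ 2 * Real.exp (-x ^ 2)|
          = |16 * x * (hermiteP m).eval x ^ 2 * Real.exp (-x ^ 2)| := by
        rw [He]
      rw [habs]
      exact div_le_self (abs_nonneg _) (hv1 x)
    have hzero := integral_hasDerivAt_eq_zero F f hFd hIf hFtop hFbot
    have hsplit : ∫ x : ℝ, f x
        = 4 * (∫ x : ℝ, (He (m + 1) x) ^ 2 * Real.exp (-x ^ 2))
          + 16 * (∫ x : ℝ, (He m x) ^ 2 * Real.exp (-x ^ 2))
          - ∫ x : ℝ, ((pE ((m + 3 : ℕ) : ℤ)).eval x) ^ 2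
              * (Real.exp (-x ^ 2) / (1 + 2 * x ^ 2) ^ 2) := by
      have hsub : ∫ x : ℝ, f x
          = (∫ x : ℝ, (4 * ((He (m + 1) x) ^ 2 * Real.exp (-x ^ 2))
              + 16 * ((He m x) ^ 2 * Real.exp (-x ^ 2))))
            - ∫ x : ℝ, ((pE ((m + 3 : ℕ) : ℤ)).eval x) ^ 2
                * (Real.exp (-x ^ 2) / (1 + 2 * x ^ 2) ^ 2) :=
        MeasureTheory.integral_sub ((hI1.const_mul 4).add (hI0.const_mul 16)) hIp
      have hadd : (∫ x : ℝ, (4 * ((He (m + 1) x) ^ 2 * Real.exp (-x ^ 2))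
              + 16 * ((He m x) ^ 2 * Real.exp (-x ^ 2))))
          = (∫ x : ℝ, 4 * ((He (m + 1) x) ^ 2 * Real.exp (-x ^ 2)))
            + ∫ x : ℝ, 16 * ((He m x) ^ 2 * Real.exp (-x ^ 2)) :=
        MeasureTheory.integral_add (hI1.const_mul 4) (hI0.const_mul 16)
      have hm1 : (∫ x : ℝ, 4 * ((He (m + 1) x) ^ 2 * Real.exp (-x ^ 2)))
          = 4 * ∫ x : ℝ, (He (m + 1) x) ^ 2 * Real.exp (-x ^ 2) :=
        MeasureTheory.integral_const_mul 4 _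
      have hm2 : (∫ x : ℝ, 16 * ((He m x) ^ 2 * Real.exp (-x ^ 2)))
          = 16 * ∫ x : ℝ, (He m x) ^ 2 * Real.exp (-x ^ 2) :=
        MeasureTheory.integral_const_mul 16 _
      rw [hsub, hadd, hm1, hm2]
    rw [hzero] at hsplit
    have hval : ∫ x : ℝ, ((pE ((m + 3 : ℕ) : ℤ)).eval x) ^ 2
        * (Real.exp (-x ^ 2) / (1 + 2 * x ^ 2) ^ 2)
        = 4 * (Real.sqrt Real.pi * 2 ^ (m + 1) * (Nat.factorial (m + 1) : ℝ))
          + 16 * (Real.sqrt Real.pi * 2 ^ m * (Nat.factorial m : ℝ)) := by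
      rw [← He_norm (m + 1), ← He_norm m]
      linarith
    rw [hval]
    have hfac : (Nat.factorial (m + 3) : ℝ)
        = ((m : ℝ) + 3) * ((m : ℝ) + 2) * ((m : ℝ) + 1) * (Nat.factorial m : ℝ) := by
      rw [show m + 3 = (m + 2) + 1 from rfl, Nat.factorial_succ,
        show m + 2 = (m + 1) + 1 from rfl, Nat.factorial_succ, Nat.factorial_succ]
      push_cast; ring
    have hfac1 : (Nat.factorial (m + 1) : ℝ) = ((m : ℝ) + 1) * (Nat.factorial m : ℝ) := by
      rw [Nat.factorial_succ]; push_cast; ring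
    rw [hfac, hfac1]
    have hne1 : ((m : ℝ) + 2) ≠ 0 := by positivity
    have hne2 : ((m : ℝ) + 1) ≠ 0 := by positivity
    have hcast : ((m + 3 : ℕ) : ℝ) = (m : ℝ) + 3 := by push_cast; ring
    rw [hcast]
    have hd1 : (m : ℝ) + 3 - 1 = (m : ℝ) + 2 := by ring
    have hd2 : (m : ℝ) + 3 - 2 = (m : ℝ) + 1 := by ring
    rw [hd1, hd2]
    field_simp
    ring
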